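/- An element z ∈ F₂ is a product of cubes in F₂ (i.e. z = u₁³ u₂³ ⋯ u_s³ for some s ≥ 1 and u₁, …, u_s ∈ F₂) if and only if its image in M₂ = F₂/F₂'' is a product of cubes, i.e. if and only if there exist u₁, …, u_s ∈ F₂ with z·(u₁³ u₂³ ⋯ u_s³)⁻¹ ∈ F₂''. -/

import Mathlib

open Subgroup
open scoped commutatorElement

section Exp3

variable {G : Type*} [Group G]

lemma cube_L1 (h : ∀ g : G, g ^ 3 = 1) (a b : G) : a * b * a = b⁻¹ * a⁻¹ * b⁻¹ := by
  have := h (a * b)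
  rw [pow_succ, pow_two] at this
  have h2 : a * b * a = (b * a * b)⁻¹ := by
    rw [eq_inv_iff_mul_eq_one]
    calc a * b * a * (b * a * b) = a * b * (a * b) * (a * b) := by group
    _ = 1 := by rw [← this]
  rw [h2]; group

lemma inv_eq_sq (h : ∀ g : G, g ^ 3 = 1) (v : G) : v⁻¹ = v * v := by
  have := h v; rw [pow_succ, pow_two] at this
  rw [inv_eq_iff_mul_eq_one, ← mul_assoc, this]

lemma conj_commute3 (h : ∀ g : G, g ^ 3 = 1) (u v : G) : Commute u (v⁻¹ * u * v) := by
  show u * (v⁻¹ * u * v) = (v⁻¹ * u * v) * u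
  have hvv : v⁻¹ * v⁻¹ = v := by
    have := inv_eq_sq h v⁻¹; rw [inv_inv] at this; exact this.symm
  have e1 : u * v⁻¹ * u = v * u⁻¹ * v := by
    have := cube_L1 h u v⁻¹; rwa [inv_inv] at this
  have e2 : u * v * u = v⁻¹ * u⁻¹ * v⁻¹ := cube_L1 h u v
  calc u * (v⁻¹ * u * v) = (u * v⁻¹ * u) * v := by group
  _ = v * u⁻¹ * (v * v) := by rw [e1]; group
  _ = v * u⁻¹ * v⁻¹ := by rw [← inv_eq_sq h v]
  _ = (v⁻¹ * v⁻¹) * u⁻¹ * v⁻¹ := by rw [hvv]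
  _ = v⁻¹ * (v⁻¹ * u⁻¹ * v⁻¹) := by group
  _ = v⁻¹ * (u * v * u) := by rw [← e2]
  _ = (v⁻¹ * u * v) * u := by group

lemma conj_conj_commute3 (h : ∀ g : G, g ^ 3 = 1) (g u v : G) :
    Commute (u * g * u⁻¹) (v * g * v⁻¹) := by
  have h1 := (conj_commute3 h g (v⁻¹ * u)).map (MulAut.conj u).toMonoidHom
  simp only [MulAut.conj_apply, MulEquiv.coe_toMonoidHom] at h1
  convert h1 using 1 <;> group

lemma closure_comm {S : Set G} (hS : ∀ s ∈ S, ∀ t ∈ S, Commute s t) :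
    ∀ p ∈ closure S, ∀ q ∈ closure S, Commute p q := by
  intro p hp q hq
  induction hp, hq using closure_induction₂ with
  | mem x y hx hy => exact hS x hx y hy
  | one_left x hx => exact Commute.one_left x
  | one_right x hx => exact Commute.one_right x
  | mul_left x y z hx hy hz h1 h2 => exact h1.mul_left h2
  | mul_right y z x hy hz hx h1 h2 => exact h1.mul_right h2
  | inv_left x y hx hy h1 => exact h1.inv_left
  | inv_right x y hx hy h1 => exact h1.inv_right

lemma abelian_of_gen {S : Set G} (htop : closure S = ⊤)
    (hS : ∀ s ∈ S, ∀ t ∈ S, Commute s t) (p q : G) : Commute p q :=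
  closure_comm hS p (htop ▸ mem_top p) q (htop ▸ mem_top q)

/-- In a group of exponent 3 generated by two elements, the second derived subgroup
is trivial. -/
lemma key_derived (h : ∀ g : G, g ^ 3 = 1) (a b : G) (htop : closure ({a, b} : Set G) = ⊤) :
    derivedSeries G 2 = ⊥ := by
  set N : Subgroup G := normalClosure {⁅a, b⁆} with hN
  -- N is abelian
  have hNcomm : ∀ p ∈ N, ∀ q ∈ N, Commute p q := by
    apply closure_comm
    intro s hs t ht
    rw [Group.mem_conjugatesOfSet_iff] at hs ht
    obtain ⟨c, hc, hcs⟩ := hs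
    obtain ⟨d, hd, hdt⟩ := ht
    rw [Set.mem_singleton_iff] at hc hd
    subst hc hd
    rw [isConj_iff] at hcs hdt
    obtain ⟨u, rfl⟩ := hcs
    obtain ⟨v, rfl⟩ := hdt
    exact conj_conj_commute3 h _ u v
  -- quotient by N is abelian
  have hQab : ∀ p q : G ⧸ N, Commute p q := by
    apply abelian_of_gen (S := {QuotientGroup.mk' N a, QuotientGroup.mk' N b})
    · have h1 : Subgroup.map (QuotientGroup.mk' N) (closure {a, b}) = ⊤ := by
        rw [htop]; exact map_top_of_surjective _ (QuotientGroup.mk'_surjective N)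
      rw [MonoidHom.map_closure, Set.image_pair] at h1
      exact h1
    · have hab : Commute ((QuotientGroup.mk' N) a) ((QuotientGroup.mk' N) b) := by
        rw [← commutatorElement_eq_one_iff_commute, ← map_commutatorElement,
          ← MonoidHom.mem_ker, QuotientGroup.ker_mk']
        exact subset_normalClosure rfl
      rintro s (rfl | rfl) t (rfl | rfl)
      · exact Commute.refl _
      · exact hab
      · exact hab.symm
      · exact Commute.refl _
  -- derived subgroup ≤ N
  have hD1 : derivedSeries G 1 ≤ N := by
    rw [derivedSeries_succ, commutator_le]
    intro p _ q _
    rw [← QuotientGroup.ker_mk' N, MonoidHom.mem_ker, map_commutatorElement,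
      commutatorElement_eq_one_iff_commute]
    exact hQab _ _
  rw [derivedSeries_succ, eq_bot_iff, commutator_le]
  intro p hp q hq
  rw [mem_bot, commutatorElement_eq_one_iff_commute]
  exact hNcomm p (hD1 hp) q (hD1 hq)

end Exp3

local notation "F" => FreeGroup (Fin 2)

/-- The subgroup of products of cubes. -/
def cubeSub : Subgroup F where
  carrier := {z | ∃ L : List F, L ≠ [] ∧ z = (L.map (fun u => u ^ 3)).prod}
  one_mem' := ⟨[1], by simp⟩
  mul_mem' := by
    rintro x y ⟨L, hL, rfl⟩ ⟨M, hM, rfl⟩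
    exact ⟨L ++ M, by simp [hL], by simp⟩
  inv_mem' := by
    rintro x ⟨L, hL, rfl⟩
    refine ⟨(L.map (fun u => u⁻¹)).reverse, by simpa using hL, ?_⟩
    rw [List.prod_inv_reverse]
    simp only [List.map_map, List.map_reverse]
    congr 2
    ext u
    simp [Function.comp]

lemma cubeSub_normal : (cubeSub).Normal := by
  constructor
  rintro x ⟨L, hL, rfl⟩ g
  refine ⟨L.map (fun u => g * u * g⁻¹), by simpa using hL, ?_⟩
  have h1 : g * (L.map (fun u => u ^ 3)).prod * g⁻¹
      = (MulAut.conj g).toMonoidHom (L.map (fun u => u ^ 3)).prod := by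
    simp [MulAut.conj_apply]
  rw [h1, map_list_prod, List.map_map, List.map_map]
  congr 1
  ext u
  simp [MulAut.conj_apply]

/-- The verbal subgroup generated by cubes. -/
def cubeK : Subgroup F := normalClosure {g : F | ∃ u : F, g = u ^ 3}

instance : (cubeK).Normal := Subgroup.normalClosure_normal

lemma cubeK_le_cubeSub : cubeK ≤ cubeSub := by
  haveI := cubeSub_normal
  apply normalClosure_le_normal
  rintro g ⟨u, rfl⟩
  exact ⟨[u], by simp, by simp⟩

lemma quot_exp3 : ∀ q : F ⧸ cubeK, q ^ 3 = 1 := by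
  intro q
  induction q using QuotientGroup.induction_on with
  | H g =>
    have : ((QuotientGroup.mk' cubeK) g) ^ 3 = (QuotientGroup.mk' cubeK) (g ^ 3) := by
      rw [map_pow]
    show ((QuotientGroup.mk' cubeK) g) ^ 3 = 1
    rw [this, ← MonoidHom.mem_ker, QuotientGroup.ker_mk']
    exact subset_normalClosure ⟨g, rfl⟩

lemma free_gen : closure ({FreeGroup.of 0, FreeGroup.of 1} : Set F) = ⊤ := by
  have h1 : (Set.range (FreeGroup.of : Fin 2 → F))
      = {FreeGroup.of 0, FreeGroup.of 1} := by
    ext g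
    constructor
    · rintro ⟨i, rfl⟩
      fin_cases i
      · exact Or.inl rfl
      · exact Or.inr rfl
    · rintro (rfl | rfl)
      · exact ⟨0, rfl⟩
      · exact ⟨1, rfl⟩
  rw [← h1]
  exact FreeGroup.closure_range_of (Fin 2)

lemma quot_gen : closure ({QuotientGroup.mk' cubeK (FreeGroup.of 0),
    QuotientGroup.mk' cubeK (FreeGroup.of 1)} : Set (F ⧸ cubeK)) = ⊤ := by
  have h1 : Subgroup.map (QuotientGroup.mk' cubeK)
      (closure {FreeGroup.of 0, FreeGroup.of 1}) = ⊤ := by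
    rw [free_gen]; exact map_top_of_surjective _ (QuotientGroup.mk'_surjective cubeK)
  rw [MonoidHom.map_closure, Set.image_pair] at h1
  exact h1

lemma derived_le_cubeK : derivedSeries F 2 ≤ cubeK := by
  intro z hz
  have h1 : (QuotientGroup.mk' cubeK) z ∈ derivedSeries (F ⧸ cubeK) 2 :=
    map_derivedSeries_le_derivedSeries (QuotientGroup.mk' cubeK) 2
      (Subgroup.mem_map.2 ⟨z, hz, rfl⟩)
  rw [key_derived quot_exp3 _ _ quot_gen, mem_bot] at h1
  rw [← QuotientGroup.ker_mk' cubeK, MonoidHom.mem_ker]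
  exact h1

theorem stmt_15 (z : FreeGroup (Fin 2)) :
    (∃ L : List (FreeGroup (Fin 2)), L ≠ [] ∧ z = (L.map (fun u => u ^ 3)).prod) ↔
    (∃ L : List (FreeGroup (Fin 2)), L ≠ [] ∧
      z * ((L.map (fun u => u ^ 3)).prod)⁻¹ ∈ derivedSeries (FreeGroup (Fin 2)) 2) := by
  constructor
  · rintro ⟨L, hL, rfl⟩
    exact ⟨L, hL, by rw [mul_inv_cancel]; exact Subgroup.one_mem _⟩
  · rintro ⟨L, hL, hmem⟩
    have h1 : z * ((L.map (fun u => u ^ 3)).prod)⁻¹ ∈ cubeSub :=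
      cubeK_le_cubeSub (derived_le_cubeK hmem)
    have h2 : (L.map (fun u => u ^ 3)).prod ∈ cubeSub := ⟨L, hL, rfl⟩
    have h3 : z ∈ cubeSub := by
      have := cubeSub.mul_mem h1 h2
      simpa using this
    exact h3
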